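/- Combinatorial identity from the high-SNR MMSE analysis: for integers N_t > N_r ≥ 1, N_t Σ_{k=0}^{N_r-1} C(N_t-1, k) Σ_{q=0}^{k} C(k,q) (-1)^{k-q}/(N_t - q - 1) = Σ_{k=1}^{N_r} 1/(1 - k/N_t) = Σ_{k=0}^{N_r-1} N_t/(N_t - k - 1). -/

import Mathlib

open Nat

lemma aux_sum : ∀ (k : ℕ) (x : ℝ), (∀ j ∈ Finset.range (k+1), x + j ≠ 0) →
    ∑ j ∈ Finset.range (k+1), (-1:ℝ)^j * (k.choose j) / (x + j)
      = (k ! : ℝ) / ∏ j ∈ Finset.range (k+1), (x + j) := by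
  intro k
  induction k with
  | zero => intro x hx; simp
  | succ k ih =>
    intro x hx
    have hx' : ∀ j ∈ Finset.range (k+1), x + j ≠ 0 := fun j hj => by
      have := Finset.mem_range.mp hj
      exact hx j (Finset.mem_range.mpr (by omega))
    have hx'' : ∀ j ∈ Finset.range (k+1), (x+1) + j ≠ 0 := fun j hj => by
      have hm := Finset.mem_range.mp hj
      have := hx (j+1) (Finset.mem_range.mpr (by omega))
      push_cast at this
      intro h; apply this; linarith
    -- S_{k+1}(x) = S_k(x) - S_k(x+1)
    have hsplit : ∑ j ∈ Finset.range (k+2), (-1:ℝ)^j * ((k+1).choose j) / (x + j)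
        = (∑ j ∈ Finset.range (k+1), (-1:ℝ)^j * (k.choose j) / (x + j))
          - ∑ j ∈ Finset.range (k+1), (-1:ℝ)^j * (k.choose j) / ((x+1) + j) := by
      rw [Finset.sum_range_succ']
      have e0 : ∑ i ∈ Finset.range (k+1), (-1:ℝ)^(i+1) * ((k+1).choose (i+1)) / (x + ↑(i+1))
          = (∑ i ∈ Finset.range (k+1), (-1:ℝ)^(i+1) * (k.choose (i+1)) / (x + ↑(i+1)))
            + ∑ i ∈ Finset.range (k+1), (-1:ℝ)^(i+1) * (k.choose i) / (x + ↑(i+1)) := by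
        rw [← Finset.sum_add_distrib]
        refine Finset.sum_congr rfl fun i hi => ?_
        rw [Nat.choose_succ_succ]
        push_cast
        ring
      rw [e0]
      have e1 : (∑ i ∈ Finset.range (k+1), (-1:ℝ)^(i+1) * (k.choose (i+1)) / (x + ↑(i+1)))
            + (-1:ℝ)^0 * ((k+1).choose 0) / (x + ↑(0:ℕ))
          = ∑ j ∈ Finset.range (k+1), (-1:ℝ)^j * (k.choose j) / (x + j) := by
        have := Finset.sum_range_succ' (fun j => (-1:ℝ)^j * (k.choose j) / (x + j)) (k+1)
        rw [Finset.sum_range_succ] at this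
        simp only [Nat.choose_succ_self, Nat.cast_zero, mul_zero, zero_div, add_zero, zero_mul, mul_one] at this
        simp only [Nat.choose_zero_right, Nat.cast_one, Nat.cast_zero, add_zero, pow_zero,
          one_mul] at this ⊢
        push_cast at this ⊢
        linarith [this]
      have e2 : ∑ i ∈ Finset.range (k+1), (-1:ℝ)^(i+1) * (k.choose i) / (x + ↑(i+1))
          = - ∑ j ∈ Finset.range (k+1), (-1:ℝ)^j * (k.choose j) / ((x+1) + j) := by
        rw [← Finset.sum_neg_distrib]
        refine Finset.sum_congr rfl fun i hi => ?_
        push_cast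
        ring
      rw [e2]
      push_cast
      push_cast at e1
      linarith [e1]
    rw [hsplit, ih x hx', ih (x+1) hx'']
    have hA : (∏ j ∈ Finset.range (k+1), (x + j)) ≠ 0 :=
      Finset.prod_ne_zero_iff.mpr hx'
    have hB : (∏ j ∈ Finset.range (k+1), ((x+1) + j)) ≠ 0 :=
      Finset.prod_ne_zero_iff.mpr hx''
    have hP : (∏ j ∈ Finset.range (k+2), (x + j)) ≠ 0 := by
      refine Finset.prod_ne_zero_iff.mpr (fun j hj => hx j hj)
    have eA : (∏ j ∈ Finset.range (k+1), (x + j)) * (x + ((k:ℝ)+1)) = ∏ j ∈ Finset.range (k+1+1), (x + j) := by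
      conv_rhs => rw [Finset.prod_range_succ]
      push_cast; ring
    have ecg : (∏ j ∈ Finset.range (k+1), ((x+1) + (j:ℝ))) = ∏ j ∈ Finset.range (k+1), (x + ((j:ℝ)+1)) :=
      Finset.prod_congr rfl fun i _ => by ring
    have eB : x * ∏ j ∈ Finset.range (k+1), ((x+1) + j) = ∏ j ∈ Finset.range (k+1+1), (x + j) := by
      conv_rhs => rw [Finset.prod_range_succ']
      push_cast
      rw [ecg]; ring
    rw [Nat.factorial_succ]
    push_cast
    rw [div_sub_div _ _ hA hB, div_eq_div_iff (mul_ne_zero hA hB) (by rw [← eA]; exact mul_ne_zero hA (by simpa [add_assoc] using hx (k+1) (by simp)))]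
    linear_combination (k ! : ℝ) * ((∏ j ∈ Finset.range (k+1), (x + (j:ℝ))) * eB
      - (∏ j ∈ Finset.range (k+1), ((x+1) + (j:ℝ))) * eA)

lemma natProd (m : ℕ) (hm : 1 ≤ m) : ∀ k, (∏ j ∈ Finset.range (k+1), (m+j)) * (m-1)! = (m+k)! := by
  intro k
  induction k with
  | zero => simpa using Nat.mul_factorial_pred (by omega : m ≠ 0)
  | succ k ih =>
    rw [Finset.prod_range_succ, mul_right_comm, ih]
    rw [show m + (k+1) = (m+k) + 1 from rfl, Nat.factorial_succ]
    ring

lemma chooseProd (n k : ℕ) (hk : k < n) :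
    n.choose k * k ! * (n - k) = ∏ j ∈ Finset.range (k+1), ((n-k)+j) := by
  set m := n - k with hm_def
  have hm : 1 ≤ m := by omega
  have hmk : m + k = n := by omega
  refine Nat.eq_of_mul_eq_mul_right (Nat.factorial_pos (m-1)) ?_
  rw [natProd m hm k, hmk]
  have h2 : m * (m-1)! = m ! := Nat.mul_factorial_pred (by omega)
  calc n.choose k * k ! * m * (m-1)! = n.choose k * k ! * (m * (m-1)!) := by ring
    _ = n.choose k * k ! * m ! := by rw [h2]
    _ = n ! := by
        rw [hm_def]
        exact Nat.choose_mul_factorial_mul_factorial (le_of_lt hk)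

theorem stmt8 (Nr Nt : ℕ) (hNr : 1 ≤ Nr) (hNt : Nr < Nt) :
    ((Nt : ℝ) * ∑ k ∈ Finset.range Nr, ((Nt - 1).choose k : ℝ) *
        ∑ q ∈ Finset.range (k + 1),
          (k.choose q : ℝ) * (-1 : ℝ) ^ (k - q) / ((Nt : ℝ) - q - 1) =
      ∑ k ∈ Finset.Icc 1 Nr, 1 / (1 - (k : ℝ) / Nt)) ∧
    (∑ k ∈ Finset.Icc 1 Nr, 1 / (1 - (k : ℝ) / Nt) =
      ∑ k ∈ Finset.range Nr, (Nt : ℝ) / ((Nt : ℝ) - k - 1)) := by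
  have hNt1 : 1 ≤ Nt := by omega
  have hsecond : ∑ k ∈ Finset.Icc 1 Nr, 1 / (1 - (k : ℝ) / Nt) =
      ∑ k ∈ Finset.range Nr, (Nt : ℝ) / ((Nt : ℝ) - k - 1) := by
    rw [show Finset.Icc 1 Nr = Finset.Ico 1 (Nr+1) by ext; simp,
      Finset.sum_Ico_eq_sum_range]
    simp only [Nat.add_sub_cancel]
    refine Finset.sum_congr rfl fun i hi => ?_
    have hi' : i < Nr := Finset.mem_range.mp hi
    have h1 : (0:ℝ) < (Nt:ℝ) := by positivity
    have h2 : ((i:ℝ) + 1) < Nt := by exact_mod_cast (show i + 1 < Nt by omega)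
    have hNt0 : (Nt:ℝ) ≠ 0 := by positivity
    push_cast
    have hd : (1:ℝ) - (1+(i:ℝ))/(Nt:ℝ) = ((Nt:ℝ)-(i:ℝ)-1)/(Nt:ℝ) := by
      field_simp
      ring
    rw [hd, one_div_div]
  refine ⟨?_, hsecond⟩
  rw [hsecond]
  rw [Finset.mul_sum]
  refine Finset.sum_congr rfl fun k hk => ?_
  have hk' : k < Nr := Finset.mem_range.mp hk
  have hkNt : k + 1 < Nt := by omega
  -- inner sum via reflection
  have hrefl : ∑ q ∈ Finset.range (k + 1),
      (k.choose q : ℝ) * (-1 : ℝ) ^ (k - q) / ((Nt : ℝ) - q - 1)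
      = ∑ j ∈ Finset.range (k + 1),
        (-1:ℝ)^j * (k.choose j) / ((((Nt - 1 - k : ℕ)) : ℝ) + j) := by
    rw [← Finset.sum_range_reflect]
    refine Finset.sum_congr rfl fun j hj => ?_
    have hj' : j < k + 1 := Finset.mem_range.mp hj
    have h1 : k + 1 - 1 - j = k - j := by omega
    rw [h1]
    have h2 : k - (k - j) = j := by omega
    have h3 : k.choose (k - j) = k.choose j := Nat.choose_symm (by omega : j ≤ k)
    rw [h2, h3]
    have h4 : (((Nt - 1 - k : ℕ)) : ℝ) = (Nt : ℝ) - 1 - k := by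
      push_cast [Nat.cast_sub (by omega : k ≤ Nt - 1), Nat.cast_sub (by omega : 1 ≤ Nt)]
      ring
    have h5 : (((k - j : ℕ)) : ℝ) = (k : ℝ) - j := by
      push_cast [Nat.cast_sub (by omega : j ≤ k)]; ring
    rw [h4, h5]
    ring_nf
  rw [hrefl]
  set m : ℕ := Nt - 1 - k with hm_def
  have hm1 : 1 ≤ m := by omega
  have hxne : ∀ j ∈ Finset.range (k+1), ((m:ℝ)) + j ≠ 0 := fun j hj => by positivity
  rw [aux_sum k ((m:ℝ)) hxne]
  have hprod : ∏ j ∈ Finset.range (k+1), ((m:ℝ) + j)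
      = ((∏ j ∈ Finset.range (k+1), (m + j) : ℕ) : ℝ) := by push_cast; rfl
  have hcp : (Nt - 1).choose k * k ! * m = ∏ j ∈ Finset.range (k+1), (m + j) := by
    have := chooseProd (Nt - 1) k (by omega)
    rwa [show Nt - 1 - k = m from rfl] at this
  have hmr : ((m : ℕ) : ℝ) = (Nt:ℝ) - k - 1 := by
    rw [hm_def]
    push_cast [Nat.cast_sub (by omega : k ≤ Nt - 1), Nat.cast_sub (by omega : 1 ≤ Nt)]
    ring
  have hprodne : ((∏ j ∈ Finset.range (k+1), (m + j) : ℕ) : ℝ) ≠ 0 := by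
    rw [← hprod]; exact Finset.prod_ne_zero_iff.mpr hxne
  have hfact : (0:ℝ) < (k ! : ℝ) := by exact_mod_cast Nat.factorial_pos k
  rw [hprod, ← hmr]
  have hmne : ((m:ℕ):ℝ) ≠ 0 := by positivity
  have hkey : (((Nt - 1).choose k : ℕ) : ℝ) * (k ! : ℝ) * ((m:ℕ) : ℝ)
      = ((∏ j ∈ Finset.range (k+1), (m + j) : ℕ) : ℝ) := by exact_mod_cast hcp
  rw [← mul_div_assoc, ← mul_div_assoc, div_eq_div_iff hprodne hmne]
  linear_combination (Nt:ℝ) * hkey
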